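/- arXiv:1907.10742 — 6 statements merged into one kernel-verified Lean document; each statement's English description precedes it below -/
import Mathlib

section
/- Let G be (r,s)-robust with coloring and let G' be obtained from G by adding a new vertex u together with edges from u to at least r+s−1 vertices of G all sharing a common color (u is assigned an arbitrary color). Then G' is (r,s)-robust with coloring. -/
variable {V : Type*} {Γ : Type*}

/-- Neighbors of `v` outside `S`. -/
def nOut (G : SimpleGraph V) (S : Set V) (v : V) : Set V :=
  {u | G.Adj v u ∧ u ∉ S}

/-- `v` is `r`-valid with respect to `S`: it has at least `r` neighbors outside `S`
sharing a common color, or two neighbors outside `S` with distinct colors. -/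
def RValid (G : SimpleGraph V) (C : V → Γ) (r : ℕ) (S : Set V) (v : V) : Prop :=
  (∃ c : Γ, r ≤ {u | u ∈ nOut G S v ∧ C u = c}.ncard) ∨
  (∃ u ∈ nOut G S v, ∃ w ∈ nOut G S v, C u ≠ C w)

/-- The set of `r`-valid nodes of `S`. -/
def validSet (G : SimpleGraph V) (C : V → Γ) (r : ℕ) (S : Set V) : Set V :=
  {v ∈ S | RValid G C r S v}

/-- All nodes of `S` share one color. -/
def MonoChromatic (C : V → Γ) (S : Set V) : Prop := ∀ u ∈ S, ∀ w ∈ S, C u = C w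

/-- `(r,s)`-robustness with coloring. -/
def RSRobustC (G : SimpleGraph V) (C : V → Γ) (r s : ℕ) : Prop :=
  ∀ S1 S2 : Set V, S1.Nonempty → S2.Nonempty → Disjoint S1 S2 →
    (validSet G C r S1).ncard = S1.ncard ∨
    (validSet G C r S2).ncard = S2.ncard ∨
    (MonoChromatic C (validSet G C r S1 ∪ validSet G C r S2) ∧
      s ≤ (validSet G C r S1 ∪ validSet G C r S2).ncard) ∨
    (∃ u ∈ validSet G C r S1 ∪ validSet G C r S2,
      ∃ w ∈ validSet G C r S1 ∪ validSet G C r S2, C u ≠ C w)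

/-- Classical `(r,s)`-robustness. -/
def RSRobust (G : SimpleGraph V) (r s : ℕ) : Prop :=
  ∀ S1 S2 : Set V, S1.Nonempty → S2.Nonempty → Disjoint S1 S2 →
    ({v ∈ S1 | r ≤ (nOut G S1 v).ncard}).ncard = S1.ncard ∨
    ({v ∈ S2 | r ≤ (nOut G S2 v).ncard}).ncard = S2.ncard ∨
    s ≤ ({v ∈ S1 | r ≤ (nOut G S1 v).ncard} ∪ {v ∈ S2 | r ≤ (nOut G S2 v).ncard}).ncard

/-- `v` has three neighbors outside `S` with pairwise distinct colors. -/
def ThreeDistinct (G : SimpleGraph V) (C : V → Γ) (S : Set V) (v : V) : Prop :=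
  ∃ a ∈ nOut G S v, ∃ b ∈ nOut G S v, ∃ c ∈ nOut G S v,
    C a ≠ C b ∧ C a ≠ C c ∧ C b ≠ C c

/-- `r`-robustness with coloring. -/
def RRobustC (G : SimpleGraph V) (C : V → Γ) (r : ℕ) : Prop :=
  ∀ S1 S2 : Set V, S1.Nonempty → S2.Nonempty → Disjoint S1 S2 →
    (∃ v ∈ S1, r ≤ (nOut G S1 v).ncard ∨ ThreeDistinct G C S1 v) ∨
    (∃ v ∈ S2, r ≤ (nOut G S2 v).ncard ∨ ThreeDistinct G C S2 v)

/-- Classical `r`-robustness. -/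
def RRobust (G : SimpleGraph V) (r : ℕ) : Prop :=
  ∀ S1 S2 : Set V, S1.Nonempty → S2.Nonempty → Disjoint S1 S2 →
    (∃ v ∈ S1, r ≤ (nOut G S1 v).ncard) ∨ (∃ v ∈ S2, r ≤ (nOut G S2 v).ncard)

/-- Mono-chromatic robustness. -/
def MonoRobust (G : SimpleGraph V) (C : V → Γ) : Prop :=
  ∀ S1 S2 : Set V, S1.Nonempty → S2.Nonempty → Disjoint S1 S2 →
    (∃ v ∈ S1, ThreeDistinct G C S1 v) ∨ (∃ v ∈ S2, ThreeDistinct G C S2 v)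


section Helpers

variable [Fintype V]

lemma mono_or_distinct' {W : Type*} [Fintype W] (D : W → Γ) (s : ℕ) (A B : Set W)
    (hBA : B ⊆ A) (hB : s ≤ B.ncard) :
    (MonoChromatic D A ∧ s ≤ A.ncard) ∨ (∃ u ∈ A, ∃ w ∈ A, D u ≠ D w) := by
  by_cases h : MonoChromatic D A
  · exact Or.inl ⟨h, hB.trans (Set.ncard_le_ncard hBA (Set.toFinite _))⟩
  · right
    unfold MonoChromatic at h
    push_neg at h
    exact h

lemma master_aux (G : SimpleGraph V) (G' : SimpleGraph (Option V)) (C : V → Γ) (cu : Γ)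
    (r s : ℕ) (hr : 1 < r) (hs : 1 < s) (T : Set V)
    (hadj : ∀ a b : V, G'.Adj (some a) (some b) ↔ G.Adj a b)
    (hadjU : ∀ a : V, G'.Adj none (some a) ↔ a ∈ T)
    (hTcard : r + s - 1 ≤ T.ncard)
    (hTmono : MonoChromatic C T)
    (hG : RSRobustC G C r s)
    (S1' S2' : Set (Option V)) (h1 : S1'.Nonempty) (h2 : S2'.Nonempty)
    (hdisj : Disjoint S1' S2') (hn2 : none ∉ S2') :
    (validSet G' (fun x => x.elim cu C) r S1').ncard = S1'.ncard ∨
    (validSet G' (fun x => x.elim cu C) r S2').ncard = S2'.ncard ∨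
    (MonoChromatic (fun x => x.elim cu C)
        (validSet G' (fun x => x.elim cu C) r S1' ∪ validSet G' (fun x => x.elim cu C) r S2') ∧
      s ≤ (validSet G' (fun x => x.elim cu C) r S1' ∪ validSet G' (fun x => x.elim cu C) r S2').ncard) ∨
    (∃ u ∈ validSet G' (fun x => x.elim cu C) r S1' ∪ validSet G' (fun x => x.elim cu C) r S2',
      ∃ w ∈ validSet G' (fun x => x.elim cu C) r S1' ∪ validSet G' (fun x => x.elim cu C) r S2',
        (fun x => x.elim cu C) u ≠ (fun x => x.elim cu C) w) := by
  -- key : validity transfers along `some`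
  have key : ∀ (S' : Set (Option V)) (v : V), v ∈ validSet G C r {w | some w ∈ S'} →
      some v ∈ validSet G' (fun x => x.elim cu C) r S' := by
    rintro S' v ⟨hvS, hval⟩
    refine ⟨hvS, ?_⟩
    rcases hval with ⟨c, hc⟩ | ⟨u, hu, w, hw, hne⟩
    · left
      refine ⟨c, hc.trans ?_⟩
      have hsub : some '' {u | u ∈ nOut G {w | some w ∈ S'} v ∧ C u = c} ⊆
          {x | x ∈ nOut G' S' (some v) ∧ (x.elim cu C) = c} := by
        rintro _ ⟨u, ⟨⟨ha, hnot⟩, hcol⟩, rfl⟩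
        exact ⟨⟨(hadj v u).2 ha, hnot⟩, hcol⟩
      calc {u | u ∈ nOut G {w | some w ∈ S'} v ∧ C u = c}.ncard
          = (some '' {u | u ∈ nOut G {w | some w ∈ S'} v ∧ C u = c}).ncard :=
            (Set.ncard_image_of_injective _ (Option.some_injective V)).symm
        _ ≤ _ := Set.ncard_le_ncard hsub (Set.toFinite _)
    · right
      exact ⟨some u, ⟨(hadj v u).2 hu.1, hu.2⟩, some w, ⟨(hadj v w).2 hw.1, hw.2⟩, hne⟩
  have eqset : ∀ S : Set V, (validSet G C r S).ncard = S.ncard → validSet G C r S = S := by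
    intro S h
    exact Set.eq_of_subset_of_ncard_le (fun v hv => hv.1) h.ge (Set.toFinite S)
  have hnOutNone : ∀ S' : Set (Option V),
      nOut G' S' none = some '' {t | t ∈ T ∧ some t ∉ S'} := by
    intro S'
    ext x
    cases x with
    | none => simp [nOut]
    | some t =>
      simp only [nOut, Set.mem_setOf_eq, Set.mem_image, Option.some.injEq]
      constructor
      · rintro ⟨ha, hn⟩
        exact ⟨t, ⟨(hadjU t).1 ha, hn⟩, rfl⟩
      · rintro ⟨t', ⟨hT, hn⟩, rfl⟩
        exact ⟨(hadjU _).2 hT, hn⟩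
  have hNoneValid : ∀ S' : Set (Option V), r ≤ {t | t ∈ T ∧ some t ∉ S'}.ncard →
      RValid G' (fun x => x.elim cu C) r S' none := by
    intro S' hD
    left
    have hDne : {t | t ∈ T ∧ some t ∉ S'}.Nonempty := by
      rcases Set.eq_empty_or_nonempty {t | t ∈ T ∧ some t ∉ S'} with h | h
      · rw [h, Set.ncard_empty] at hD; omega
      · exact h
    obtain ⟨t0, ht0⟩ := hDne
    refine ⟨C t0, ?_⟩
    have hsub : some '' {t | t ∈ T ∧ some t ∉ S'} ⊆
        {x | x ∈ nOut G' S' none ∧ (x.elim cu C) = C t0} := by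
      rintro _ ⟨t, ht, rfl⟩
      refine ⟨?_, hTmono t ht.1 t0 ht0.1⟩
      rw [hnOutNone]
      exact ⟨t, ht, rfl⟩
    calc r ≤ _ := hD
      _ = (some '' {t | t ∈ T ∧ some t ∉ S'}).ncard :=
          (Set.ncard_image_of_injective _ (Option.some_injective V)).symm
      _ ≤ _ := Set.ncard_le_ncard hsub (Set.toFinite _)
  have hNoneInvalid : ∀ S' : Set (Option V), ¬ RValid G' (fun x => x.elim cu C) r S' none →
      {t | t ∈ T ∧ some t ∉ S'}.ncard ≤ r - 1 := by
    intro S' hnv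
    by_contra h
    push_neg at h
    exact hnv (hNoneValid S' (by omega))
  by_cases hn1 : none ∈ S1'
  · by_cases hsing : S1' = {none}
    · left
      have hTeq : {t | t ∈ T ∧ some t ∉ S1'} = T := by
        subst hsing; ext t; simp
      have hval : none ∈ validSet G' (fun x => x.elim cu C) r S1' :=
        ⟨hn1, hNoneValid S1' (by rw [hTeq]; omega)⟩
      have : validSet G' (fun x => x.elim cu C) r S1' = S1' := by
        refine Set.Subset.antisymm (fun x hx => hx.1) ?_
        intro x hx
        rw [hsing] at hx
        rw [Set.mem_singleton_iff] at hx
        subst hx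
        exact hval
      rw [this]
    · -- S1 nonempty
      have hS1ne : Set.Nonempty {v | some v ∈ S1'} := by
        by_contra h
        rw [Set.not_nonempty_iff_eq_empty] at h
        have hv : ∀ v : V, some v ∉ S1' := by
          intro v hv
          have hmem : v ∈ {v | some v ∈ S1'} := hv
          rw [h] at hmem
          exact hmem
        apply hsing
        ext x
        cases x with
        | none => simp [hn1]
        | some v => simp [hv v]
      have hS2ne : Set.Nonempty {v | some v ∈ S2'} := by
        obtain ⟨x, hx⟩ := h2
        cases x with
        | none => exact absurd hx hn2
        | some v => exact ⟨v, hx⟩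
      have hdj : Disjoint {v | some v ∈ S1'} {v | some v ∈ S2'} := by
        rw [Set.disjoint_left]
        intro v hv1 hv2
        exact Set.disjoint_left.mp hdisj hv1 hv2
      rcases hG _ _ hS1ne hS2ne hdj with hc | hc | ⟨hmono, hcard⟩ | ⟨u, hu, w, hw, hne⟩
      · have hX1 : validSet G C r {v | some v ∈ S1'} = {v | some v ∈ S1'} := eqset _ hc
        by_cases hnv : RValid G' (fun x => x.elim cu C) r S1' none
        · left
          have : validSet G' (fun x => x.elim cu C) r S1' = S1' := by
            refine Set.Subset.antisymm (fun x hx => hx.1) ?_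
            intro x hx
            cases x with
            | none => exact ⟨hn1, hnv⟩
            | some v => exact key S1' v (by rw [hX1]; exact hx)
          rw [this]
        · have hsmall := hNoneInvalid S1' hnv
          have hTS1 : {t | t ∈ T ∧ some t ∉ S1'} = T \ {v | some v ∈ S1'} := rfl
          have hsplit := Set.ncard_inter_add_ncard_diff_eq_ncard T {v | some v ∈ S1'}
          rw [hTS1] at hsmall
          have hbig : s ≤ (T ∩ {v | some v ∈ S1'}).ncard := by omega
          have hBsub : some '' (T ∩ {v | some v ∈ S1'}) ⊆
              validSet G' (fun x => x.elim cu C) r S1' ∪ validSet G' (fun x => x.elim cu C) r S2' := by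
            rintro _ ⟨t, ht, rfl⟩
            exact Or.inl (key S1' t (by rw [hX1]; exact ht.2))
          have hBcard : s ≤ (some '' (T ∩ {v | some v ∈ S1'})).ncard := by
            rw [Set.ncard_image_of_injective _ (Option.some_injective V)]; exact hbig
          exact Or.inr (Or.inr (mono_or_distinct' _ s _ _ hBsub hBcard))
      · right; left
        have hX2 : validSet G C r {v | some v ∈ S2'} = {v | some v ∈ S2'} := eqset _ hc
        have : validSet G' (fun x => x.elim cu C) r S2' = S2' := by
          refine Set.Subset.antisymm (fun x hx => hx.1) ?_
          intro x hx
          cases x with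
          | none => exact absurd hx hn2
          | some v => exact key S2' v (by rw [hX2]; exact hx)
        rw [this]
      · have hBsub : some '' (validSet G C r {v | some v ∈ S1'} ∪ validSet G C r {v | some v ∈ S2'}) ⊆
            validSet G' (fun x => x.elim cu C) r S1' ∪ validSet G' (fun x => x.elim cu C) r S2' := by
          rintro _ ⟨v, hv, rfl⟩
          rcases hv with hv | hv
          · exact Or.inl (key S1' v hv)
          · exact Or.inr (key S2' v hv)
        have hBcard : s ≤ (some '' (validSet G C r {v | some v ∈ S1'} ∪ validSet G C r {v | some v ∈ S2'})).ncard := by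
          rw [Set.ncard_image_of_injective _ (Option.some_injective V)]; exact hcard
        exact Or.inr (Or.inr (mono_or_distinct' _ s _ _ hBsub hBcard))
      · have himg : ∀ v, v ∈ validSet G C r {w | some w ∈ S1'} ∪ validSet G C r {w | some w ∈ S2'} →
            some v ∈ validSet G' (fun x => x.elim cu C) r S1' ∪ validSet G' (fun x => x.elim cu C) r S2' := by
          intro v hv
          rcases hv with hv | hv
          · exact Or.inl (key S1' v hv)
          · exact Or.inr (key S2' v hv)
        exact Or.inr (Or.inr (Or.inr ⟨some u, himg u hu, some w, himg w hw, hne⟩))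
  · -- none ∉ S1' and none ∉ S2'
    have hS1ne : Set.Nonempty {v | some v ∈ S1'} := by
      obtain ⟨x, hx⟩ := h1
      cases x with
      | none => exact absurd hx hn1
      | some v => exact ⟨v, hx⟩
    have hS2ne : Set.Nonempty {v | some v ∈ S2'} := by
      obtain ⟨x, hx⟩ := h2
      cases x with
      | none => exact absurd hx hn2
      | some v => exact ⟨v, hx⟩
    have hdj : Disjoint {v | some v ∈ S1'} {v | some v ∈ S2'} := by
      rw [Set.disjoint_left]
      intro v hv1 hv2
      exact Set.disjoint_left.mp hdisj hv1 hv2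
    rcases hG _ _ hS1ne hS2ne hdj with hc | hc | ⟨hmono, hcard⟩ | ⟨u, hu, w, hw, hne⟩
    · left
      have hX1 : validSet G C r {v | some v ∈ S1'} = {v | some v ∈ S1'} := eqset _ hc
      have : validSet G' (fun x => x.elim cu C) r S1' = S1' := by
        refine Set.Subset.antisymm (fun x hx => hx.1) ?_
        intro x hx
        cases x with
        | none => exact absurd hx hn1
        | some v => exact key S1' v (by rw [hX1]; exact hx)
      rw [this]
    · right; left
      have hX2 : validSet G C r {v | some v ∈ S2'} = {v | some v ∈ S2'} := eqset _ hc
      have : validSet G' (fun x => x.elim cu C) r S2' = S2' := by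
        refine Set.Subset.antisymm (fun x hx => hx.1) ?_
        intro x hx
        cases x with
        | none => exact absurd hx hn2
        | some v => exact key S2' v (by rw [hX2]; exact hx)
      rw [this]
    · have hBsub : some '' (validSet G C r {v | some v ∈ S1'} ∪ validSet G C r {v | some v ∈ S2'}) ⊆
          validSet G' (fun x => x.elim cu C) r S1' ∪ validSet G' (fun x => x.elim cu C) r S2' := by
        rintro _ ⟨v, hv, rfl⟩
        rcases hv with hv | hv
        · exact Or.inl (key S1' v hv)
        · exact Or.inr (key S2' v hv)
      have hBcard : s ≤ (some '' (validSet G C r {v | some v ∈ S1'} ∪ validSet G C r {v | some v ∈ S2'})).ncard := by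
        rw [Set.ncard_image_of_injective _ (Option.some_injective V)]; exact hcard
      exact Or.inr (Or.inr (mono_or_distinct' _ s _ _ hBsub hBcard))
    · have himg : ∀ v, v ∈ validSet G C r {w | some w ∈ S1'} ∪ validSet G C r {w | some w ∈ S2'} →
          some v ∈ validSet G' (fun x => x.elim cu C) r S1' ∪ validSet G' (fun x => x.elim cu C) r S2' := by
        intro v hv
        rcases hv with hv | hv
        · exact Or.inl (key S1' v hv)
        · exact Or.inr (key S2' v hv)
      exact Or.inr (Or.inr (Or.inr ⟨some u, himg u hu, some w, himg w hw, hne⟩))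

end Helpers

theorem rsRobustC_add_vertex_mono [Fintype V] (G : SimpleGraph V)
    (G' : SimpleGraph (Option V)) (C : V → Γ) (cu : Γ) (r s : ℕ)
    (hr : 1 < r) (hs : 1 < s) (T : Set V)
    (hadj : ∀ a b : V, G'.Adj (some a) (some b) ↔ G.Adj a b)
    (hadjU : ∀ a : V, G'.Adj none (some a) ↔ a ∈ T)
    (hTcard : r + s - 1 ≤ T.ncard)
    (hTmono : MonoChromatic C T)
    (hG : RSRobustC G C r s) :
    RSRobustC G' (fun x => x.elim cu C) r s := by
  intro S1' S2' h1 h2 hdisj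
  by_cases hn2 : none ∈ S2'
  · have hn1 : none ∉ S1' := fun h => Set.disjoint_left.mp hdisj h hn2
    rcases master_aux G G' C cu r s hr hs T hadj hadjU hTcard hTmono hG S2' S1' h2 h1
      hdisj.symm hn1 with h | h | h | h
    · exact Or.inr (Or.inl h)
    · exact Or.inl h
    · rw [Set.union_comm] at h
      exact Or.inr (Or.inr (Or.inl h))
    · rw [Set.union_comm] at h
      exact Or.inr (Or.inr (Or.inr h))
  · exact master_aux G G' C cu r s hr hs T hadj hadjU hTcard hTmono hG S1' S2' h1 h2 hdisj hn2
end

section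
/- Let G be (r,s)-robust with coloring and let G' be obtained from G by adding a new vertex u together with edges from u to at least max(r,s) vertices of G of some common color C_k and at least one vertex of a different color C_j ≠ C_k. Then G' is (r,s)-robust with coloring. -/
variable {V : Type*} {Γ : Type*}

/-! ### Auxiliary material for the proof -/

/-- The preimage of a set of `Option V` under `some`. -/
def preim (S : Set (Option V)) : Set V := {x | some x ∈ S}

lemma mono_or_distinct (C : V → Γ) (U : Set V) (s : ℕ) (h : s ≤ U.ncard) :
    (MonoChromatic C U ∧ s ≤ U.ncard) ∨ (∃ u ∈ U, ∃ w ∈ U, C u ≠ C w) := by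
  by_cases hm : MonoChromatic C U
  · exact Or.inl ⟨hm, h⟩
  · right
    unfold MonoChromatic at hm
    push_neg at hm
    exact hm

lemma valid_lift [Fintype V] (G : SimpleGraph V) (G' : SimpleGraph (Option V)) (C : V → Γ)
    (cu : Γ)
    (hadj : ∀ a b : V, G'.Adj (some a) (some b) ↔ G.Adj a b)
    (r : ℕ) (S : Set (Option V)) (v : V)
    (hv : v ∈ validSet G C r (preim S)) :
    some v ∈ validSet G' (fun x => x.elim cu C) r S := by
  obtain ⟨hvS, hval⟩ := hv
  have hlift : ∀ a : V, a ∈ nOut G (preim S) v → some a ∈ nOut G' S (some v) :=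
    fun a ha => ⟨(hadj v a).2 ha.1, ha.2⟩
  refine ⟨hvS, ?_⟩
  rcases hval with ⟨c, hc⟩ | ⟨a, ha, b, hb, hab⟩
  · left
    refine ⟨c, ?_⟩
    have himg : some '' {u | u ∈ nOut G (preim S) v ∧ C u = c} ⊆
        {u | u ∈ nOut G' S (some v) ∧ (fun x : Option V => x.elim cu C) u = c} := by
      rintro _ ⟨a, ⟨hna, hca⟩, rfl⟩
      exact ⟨hlift a hna, hca⟩
    calc r ≤ {u | u ∈ nOut G (preim S) v ∧ C u = c}.ncard := hc
      _ = (some '' {u | u ∈ nOut G (preim S) v ∧ C u = c}).ncard :=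
        (Set.ncard_image_of_injective _ (Option.some_injective V)).symm
      _ ≤ _ := Set.ncard_le_ncard himg (Set.toFinite _)
  · exact Or.inr ⟨some a, hlift a ha, some b, hlift b hb, hab⟩

lemma core_lemma [Fintype V] (G : SimpleGraph V)
    (G' : SimpleGraph (Option V)) (C : V → Γ) (cu ck : Γ) (r s : ℕ)
    (hr : 1 < r) (hs : 1 < s) (T Tk : Set V) (w : V)
    (hadj : ∀ a b : V, G'.Adj (some a) (some b) ↔ G.Adj a b)
    (hadjU : ∀ a : V, G'.Adj none (some a) ↔ a ∈ T)
    (hTk : Tk ⊆ T) (hTkcol : ∀ a ∈ Tk, C a = ck) (hTkcard : max r s ≤ Tk.ncard)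
    (hw : w ∈ T) (hwc : C w ≠ ck)
    (hG : RSRobustC G C r s)
    (S1 S2 : Set (Option V)) (h1 : S1.Nonempty) (h2 : S2.Nonempty)
    (hdisj : Disjoint S1 S2) (hn2 : none ∉ S2) :
    (validSet G' (fun x => x.elim cu C) r S1).ncard = S1.ncard ∨
    (validSet G' (fun x => x.elim cu C) r S2).ncard = S2.ncard ∨
    (MonoChromatic (fun x => x.elim cu C)
        (validSet G' (fun x => x.elim cu C) r S1 ∪ validSet G' (fun x => x.elim cu C) r S2) ∧
      s ≤ (validSet G' (fun x => x.elim cu C) r S1 ∪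
            validSet G' (fun x => x.elim cu C) r S2).ncard) ∨
    (∃ u ∈ validSet G' (fun x => x.elim cu C) r S1 ∪ validSet G' (fun x => x.elim cu C) r S2,
      ∃ v ∈ validSet G' (fun x => x.elim cu C) r S1 ∪ validSet G' (fun x => x.elim cu C) r S2,
        (fun x : Option V => x.elim cu C) u ≠ (fun x : Option V => x.elim cu C) v) := by
  set C' : Option V → Γ := fun x => x.elim cu C with hC'
  -- basic facts
  have hrTk0 : r ≤ Tk.ncard := le_trans (le_max_left r s) hTkcard
  obtain ⟨tk0, htk0⟩ := Set.nonempty_of_ncard_ne_zero (show Tk.ncard ≠ 0 by omega)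
  have hsub1 : validSet G' C' r S1 ⊆ S1 := fun x hx => hx.1
  have hsub2 : validSet G' C' r S2 ⊆ S2 := fun x hx => hx.1
  have hS2eq : some '' preim S2 = S2 := by
    ext x
    cases x with
    | none => simp [hn2]
    | some a => simp [preim]
  by_cases hS1' : (preim S1).Nonempty
  · -- main case: S1 contains some `some` vertices
    have hS2' : (preim S2).Nonempty := by
      obtain ⟨x, hx⟩ := h2
      cases x with
      | none => exact absurd hx hn2
      | some a => exact ⟨a, hx⟩
    have hdisj' : Disjoint (preim S1) (preim S2) := by
      rw [Set.disjoint_left] at hdisj ⊢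
      exact fun a ha => hdisj ha
    rcases hG (preim S1) (preim S2) hS1' hS2' hdisj' with hA | hB | hCc | hD
    · -- all of preim S1 is valid in G
      have hX1 : validSet G C r (preim S1) = preim S1 :=
        Set.eq_of_subset_of_ncard_le (fun x hx => hx.1) (le_of_eq hA.symm) (Set.toFinite _)
      have hlift1 : ∀ a ∈ preim S1, some a ∈ validSet G' C' r S1 := by
        intro a ha
        exact valid_lift G G' C cu hadj r S1 a (hX1.symm ▸ ha)
      by_cases hn1 : none ∈ S1
      · by_cases hnv : RValid G' C' r S1 none
        · -- everything in S1 is valid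
          left
          congr 1
          apply Set.Subset.antisymm hsub1
          intro x hx
          cases x with
          | none => exact ⟨hn1, hnv⟩
          | some a => exact hlift1 a hx
        · -- none is not valid: analyze Tk
          have hnoutnone : ∀ a : V, a ∈ T → a ∉ preim S1 → some a ∈ nOut G' S1 none :=
            fun a haT haS => ⟨(hadjU a).2 haT, haS⟩
          have hsmall : (Tk \ preim S1).ncard < r := by
            by_contra hge
            push_neg at hge
            apply hnv
            left
            refine ⟨ck, ?_⟩
            have himg : some '' (Tk \ preim S1) ⊆
                {u | u ∈ nOut G' S1 none ∧ C' u = ck} := by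
              rintro _ ⟨a, ⟨haTk, haS⟩, rfl⟩
              exact ⟨hnoutnone a (hTk haTk) haS, hTkcol a haTk⟩
            calc r ≤ (Tk \ preim S1).ncard := hge
              _ = (some '' (Tk \ preim S1)).ncard :=
                (Set.ncard_image_of_injective _ (Option.some_injective V)).symm
              _ ≤ _ := Set.ncard_le_ncard himg (Set.toFinite _)
          by_cases hwS : w ∈ preim S1
          · -- w is in S1 and valid; some element of Tk is also in S1 and valid
            have hnonempty : (Tk ∩ preim S1).Nonempty := by
              rw [Set.nonempty_iff_ne_empty]
              intro hemp
              have hsubd : Tk ⊆ Tk \ preim S1 := by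
                intro a ha
                refine ⟨ha, fun haS => ?_⟩
                exact absurd (Set.mem_inter ha haS) (by simp [hemp])
              have := Set.ncard_le_ncard hsubd (Set.toFinite _)
              have hrTk : r ≤ Tk.ncard := le_trans (le_max_left r s) hTkcard
              omega
            obtain ⟨tk, htkTk, htkS⟩ := hnonempty
            right; right; right
            refine ⟨some tk, Or.inl (hlift1 tk htkS), some w, Or.inl (hlift1 w hwS), ?_⟩
            simp only [hC', Option.elim]
            rw [hTkcol tk htkTk]
            exact fun h => hwc h.symm
          · -- w outside S1: all of Tk must be inside S1
            have hTkin : Tk ⊆ preim S1 := by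
              intro tk htkTk
              by_contra htkS
              apply hnv
              right
              refine ⟨some tk, hnoutnone tk (hTk htkTk) htkS, some w, hnoutnone w hw hwS, ?_⟩
              simp only [hC', Option.elim]
              rw [hTkcol tk htkTk]
              exact fun h => hwc h.symm
            have himg : some '' Tk ⊆
                validSet G' C' r S1 ∪ validSet G' C' r S2 := by
              rintro _ ⟨a, ha, rfl⟩
              exact Or.inl (hlift1 a (hTkin ha))
            have hcard : s ≤ (validSet G' C' r S1 ∪ validSet G' C' r S2).ncard := by
              calc s ≤ Tk.ncard := le_trans (le_max_right r s) hTkcard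
                _ = (some '' Tk).ncard :=
                  (Set.ncard_image_of_injective _ (Option.some_injective V)).symm
                _ ≤ _ := Set.ncard_le_ncard himg (Set.toFinite _)
            rcases mono_or_distinct C' _ s hcard with h | h
            · exact Or.inr (Or.inr (Or.inl h))
            · exact Or.inr (Or.inr (Or.inr h))
      · -- none ∉ S1: all of S1 is valid
        left
        congr 1
        apply Set.Subset.antisymm hsub1
        intro x hx
        cases x with
        | none => exact absurd hx hn1
        | some a => exact hlift1 a hx
    · -- all of preim S2 is valid in G
      have hX2 : validSet G C r (preim S2) = preim S2 :=
        Set.eq_of_subset_of_ncard_le (fun x hx => hx.1) (le_of_eq hB.symm) (Set.toFinite _)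
      right; left
      congr 1
      apply Set.Subset.antisymm hsub2
      intro x hx
      cases x with
      | none => exact absurd hx hn2
      | some a => exact valid_lift G G' C cu hadj r S2 a (hX2.symm ▸ hx)
    · -- monochromatic case in G
      obtain ⟨_, hcard⟩ := hCc
      have himg : some '' (validSet G C r (preim S1) ∪ validSet G C r (preim S2)) ⊆
          validSet G' C' r S1 ∪ validSet G' C' r S2 := by
        rintro _ ⟨a, ha, rfl⟩
        rcases ha with ha | ha
        · exact Or.inl (valid_lift G G' C cu hadj r S1 a ha)
        · exact Or.inr (valid_lift G G' C cu hadj r S2 a ha)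
      have hcard' : s ≤ (validSet G' C' r S1 ∪ validSet G' C' r S2).ncard := by
        calc s ≤ (validSet G C r (preim S1) ∪ validSet G C r (preim S2)).ncard := hcard
          _ = (some '' (validSet G C r (preim S1) ∪ validSet G C r (preim S2))).ncard :=
            (Set.ncard_image_of_injective _ (Option.some_injective V)).symm
          _ ≤ _ := Set.ncard_le_ncard himg (Set.toFinite _)
      rcases mono_or_distinct C' _ s hcard' with h | h
      · exact Or.inr (Or.inr (Or.inl h))
      · exact Or.inr (Or.inr (Or.inr h))
    · -- two distinct colors among valid nodes in G
      obtain ⟨u, hu, v, hv, huv⟩ := hD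
      right; right; right
      have hu' : some u ∈ validSet G' C' r S1 ∪ validSet G' C' r S2 := by
        rcases hu with hu | hu
        · exact Or.inl (valid_lift G G' C cu hadj r S1 u hu)
        · exact Or.inr (valid_lift G G' C cu hadj r S2 u hu)
      have hv' : some v ∈ validSet G' C' r S1 ∪ validSet G' C' r S2 := by
        rcases hv with hv | hv
        · exact Or.inl (valid_lift G G' C cu hadj r S1 v hv)
        · exact Or.inr (valid_lift G G' C cu hadj r S2 v hv)
      exact ⟨some u, hu', some v, hv', huv⟩
  · -- S1 = {none}
    have hS1eq : S1 = {none} := by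
      apply Set.Subset.antisymm
      · intro x hx
        cases x with
        | none => rfl
        | some a => exact absurd ⟨a, hx⟩ hS1'
      · intro x hx
        obtain ⟨y, hy⟩ := h1
        cases y with
        | none => rw [Set.mem_singleton_iff.1 hx]; exact hy
        | some a => exact absurd ⟨a, hy⟩ hS1'
    have hn1 : none ∈ S1 := hS1eq ▸ rfl
    have hvalnone : none ∈ validSet G' C' r S1 := by
      refine ⟨hn1, Or.inr ⟨some tk0, ⟨(hadjU tk0).2 (hTk htk0), ?_⟩,
        some w, ⟨(hadjU w).2 hw, ?_⟩, ?_⟩⟩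
      · intro h
        have : preim S1 = ∅ := Set.not_nonempty_iff_eq_empty.1 hS1'
        exact absurd (show tk0 ∈ preim S1 from h) (by simp [this])
      · intro h
        have : preim S1 = ∅ := Set.not_nonempty_iff_eq_empty.1 hS1'
        exact absurd (show w ∈ preim S1 from h) (by simp [this])
      · simp only [hC', Option.elim]
        rw [hTkcol tk0 htk0]
        exact fun h => hwc h.symm
    left
    congr 1
    apply Set.Subset.antisymm hsub1
    intro x hx
    rw [hS1eq] at hx
    rw [Set.mem_singleton_iff.1 hx]
    exact hvalnone

theorem rsRobustC_add_vertex_mixed [Fintype V] (G : SimpleGraph V)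
    (G' : SimpleGraph (Option V)) (C : V → Γ) (cu ck : Γ) (r s : ℕ)
    (hr : 1 < r) (hs : 1 < s) (T Tk : Set V) (w : V)
    (hadj : ∀ a b : V, G'.Adj (some a) (some b) ↔ G.Adj a b)
    (hadjU : ∀ a : V, G'.Adj none (some a) ↔ a ∈ T)
    (hTk : Tk ⊆ T) (hTkcol : ∀ a ∈ Tk, C a = ck) (hTkcard : max r s ≤ Tk.ncard)
    (hw : w ∈ T) (hwc : C w ≠ ck)
    (hG : RSRobustC G C r s) :
    RSRobustC G' (fun x => x.elim cu C) r s := by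
  intro S1 S2 h1 h2 hdisj
  by_cases hn2 : none ∈ S2
  · have hn1 : none ∉ S1 := fun h => (Set.disjoint_left.1 hdisj h) hn2
    have := core_lemma G G' C cu ck r s hr hs T Tk w hadj hadjU hTk hTkcol hTkcard hw hwc hG
      S2 S1 h2 h1 hdisj.symm hn1
    rw [Set.union_comm] at this
    tauto
  · exact core_lemma G G' C cu ck r s hr hs T Tk w hadj hadjU hTk hTkcol hTkcard hw hwc hG
      S1 S2 h1 h2 hdisj hn2
end

section
/- Let G be (r,s)-robust with coloring and let G' be obtained from G by adding a new vertex u together with edges from u to at least three vertices of G having pairwise distinct colors. Then G' is (r,s)-robust with coloring. -/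
variable {V : Type*} {Γ : Type*}

section Aux

variable [Fintype V] {G : SimpleGraph V} {G' : SimpleGraph (Option V)}
  {C : V → Γ} {cu : Γ} {r : ℕ}

lemma aux_nOut_map (hadj : ∀ x y : V, G'.Adj (some x) (some y) ↔ G.Adj x y)
    {S : Set V} {S' : Set (Option V)} (hS : ∀ w, some w ∈ S' ↔ w ∈ S)
    (v : V) : some '' nOut G S v ⊆ nOut G' S' (some v) := by
  rintro _ ⟨w, ⟨haw, hout⟩, rfl⟩
  exact ⟨(hadj v w).2 haw, fun h => hout ((hS w).1 h)⟩

lemma aux_rvalid_map (hadj : ∀ x y : V, G'.Adj (some x) (some y) ↔ G.Adj x y)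
    {S : Set V} {S' : Set (Option V)} (hS : ∀ w, some w ∈ S' ↔ w ∈ S)
    {v : V} (h : RValid G C r S v) :
    RValid G' (fun x => x.elim cu C) r S' (some v) := by
  have hmap := aux_nOut_map (G := G) (G' := G') hadj hS v
  rcases h with ⟨col, hcol⟩ | ⟨u, hu, w, hw, huw⟩
  · left
    refine ⟨col, ?_⟩
    calc r ≤ {u | u ∈ nOut G S v ∧ C u = col}.ncard := hcol
      _ = (some '' {u | u ∈ nOut G S v ∧ C u = col}).ncard :=
        (Set.ncard_image_of_injective _ (Option.some_injective V)).symm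
      _ ≤ _ := by
        refine Set.ncard_le_ncard ?_ (Set.toFinite _)
        rintro _ ⟨w, ⟨hw1, hw2⟩, rfl⟩
        exact ⟨hmap ⟨w, hw1, rfl⟩, hw2⟩
  · exact Or.inr ⟨some u, hmap ⟨u, hu, rfl⟩, some w, hmap ⟨w, hw, rfl⟩, huw⟩

lemma aux_pick {T : Set V} {a b c : V} (ha : a ∈ T) (hb : b ∈ T) (hc : c ∈ T)
    (hab : C a ≠ C b) (hac : C a ≠ C c) (hbc : C b ≠ C c) (S : Set V) :
    (∃ x y : V, x ∈ T ∧ y ∈ T ∧ x ∉ S ∧ y ∉ S ∧ C x ≠ C y) ∨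
    (∃ x y : V, x ∈ S ∧ y ∈ S ∧ C x ≠ C y) := by
  by_cases haS : a ∈ S <;> by_cases hbS : b ∈ S <;> by_cases hcS : c ∈ S
  · exact Or.inr ⟨a, b, haS, hbS, hab⟩
  · exact Or.inr ⟨a, b, haS, hbS, hab⟩
  · exact Or.inr ⟨a, c, haS, hcS, hac⟩
  · exact Or.inl ⟨b, c, hb, hc, hbS, hcS, hbc⟩
  · exact Or.inr ⟨b, c, hbS, hcS, hbc⟩
  · exact Or.inl ⟨a, c, ha, hc, haS, hcS, hac⟩
  · exact Or.inl ⟨a, b, ha, hb, haS, hbS, hab⟩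
  · exact Or.inl ⟨a, b, ha, hb, haS, hbS, hab⟩

lemma aux_full {T : Set V} {a b c : V}
    (hadj : ∀ x y : V, G'.Adj (some x) (some y) ↔ G.Adj x y)
    (hadjU : ∀ x : V, G'.Adj none (some x) ↔ x ∈ T)
    (ha : a ∈ T) (hb : b ∈ T) (hc : c ∈ T)
    (hab : C a ≠ C b) (hac : C a ≠ C c) (hbc : C b ≠ C c)
    {S' : Set (Option V)}
    (heq : validSet G C r {v : V | some v ∈ S'} = {v : V | some v ∈ S'})
    (hmono : MonoChromatic (fun x => x.elim cu C)
      (validSet G' (fun x => x.elim cu C) r S')) :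
    validSet G' (fun x => x.elim cu C) r S' = S' := by
  set S : Set V := {v : V | some v ∈ S'} with hSdef
  have hS : ∀ w : V, some w ∈ S' ↔ w ∈ S := fun _ => Iff.rfl
  have key : (none ∈ S' → RValid G' (fun x => x.elim cu C) r S' none) →
      validSet G' (fun x => x.elim cu C) r S' = S' := by
    intro hvalnone
    refine Set.Subset.antisymm (fun v hv => hv.1) ?_
    intro x hx
    match x with
    | none => exact ⟨hx, hvalnone hx⟩
    | some v =>
      have hv : v ∈ S := hx
      rw [← heq] at hv
      exact ⟨hx, aux_rvalid_map hadj hS hv.2⟩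
  by_cases hn : none ∈ S'
  · rcases aux_pick ha hb hc hab hac hbc S with
      ⟨x, y, hxT, hyT, hxS, hyS, hxy⟩ | ⟨x, y, hx, hy, hxy⟩
    · refine key fun _ => Or.inr ⟨some x, ⟨(hadjU x).2 hxT, fun h => hxS h⟩,
        some y, ⟨(hadjU y).2 hyT, fun h => hyS h⟩, hxy⟩
    · exfalso
      rw [← heq] at hx hy
      have m1 : some x ∈ validSet G' (fun x => x.elim cu C) r S' :=
        ⟨hx.1, aux_rvalid_map hadj hS hx.2⟩
      have m2 : some y ∈ validSet G' (fun x => x.elim cu C) r S' :=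
        ⟨hy.1, aux_rvalid_map hadj hS hy.2⟩
      exact hxy (hmono _ m1 _ m2)
  · exact key fun h => absurd h hn

end Aux

theorem rsRobustC_add_vertex_three_colors [Fintype V] (G : SimpleGraph V)
    (G' : SimpleGraph (Option V)) (C : V → Γ) (cu : Γ) (r s : ℕ)
    (hr : 1 < r) (hs : 1 < s) (T : Set V) (a b c : V)
    (hadj : ∀ x y : V, G'.Adj (some x) (some y) ↔ G.Adj x y)
    (hadjU : ∀ x : V, G'.Adj none (some x) ↔ x ∈ T)
    (ha : a ∈ T) (hb : b ∈ T) (hc : c ∈ T)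
    (hab : C a ≠ C b) (hac : C a ≠ C c) (hbc : C b ≠ C c)
    (hG : RSRobustC G C r s) :
    RSRobustC G' (fun x => x.elim cu C) r s := by
  intro S1' S2' hS1ne hS2ne hdisj
  set C' : Option V → Γ := fun x => x.elim cu C with hC'
  by_cases hmono : MonoChromatic C'
      (validSet G' C' r S1' ∪ validSet G' C' r S2')
  swap
  · right; right; right
    unfold MonoChromatic at hmono
    push_neg at hmono
    obtain ⟨u, hu, w, hw, huw⟩ := hmono
    exact ⟨u, hu, w, hw, huw⟩
  by_cases h1 : ∃ v : V, some v ∈ S1'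
  case neg =>
    -- S1' = {none}
    have hn : none ∈ S1' := by
      obtain ⟨x, hx⟩ := hS1ne
      match x with
      | none => exact hx
      | some v => exact absurd ⟨v, hx⟩ h1
    have hS1eq : S1' = {none} := by
      apply Set.eq_singleton_iff_unique_mem.2
      refine ⟨hn, fun x hx => ?_⟩
      match x with
      | none => rfl
      | some v => exact absurd ⟨v, hx⟩ h1
    have hval : RValid G' C' r S1' none := by
      refine Or.inr ⟨some a, ⟨(hadjU a).2 ha, ?_⟩, some b, ⟨(hadjU b).2 hb, ?_⟩, hab⟩
      · rw [hS1eq]; simp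
      · rw [hS1eq]; simp
    left
    have : validSet G' C' r S1' = S1' := by
      refine Set.Subset.antisymm (fun v hv => hv.1) fun x hx => ?_
      rw [hS1eq] at hx
      rw [hx]
      exact ⟨hn, hval⟩
    rw [this]
  by_cases h2 : ∃ v : V, some v ∈ S2'
  case neg =>
    have hn : none ∈ S2' := by
      obtain ⟨x, hx⟩ := hS2ne
      match x with
      | none => exact hx
      | some v => exact absurd ⟨v, hx⟩ h2
    have hS2eq : S2' = {none} := by
      apply Set.eq_singleton_iff_unique_mem.2
      refine ⟨hn, fun x hx => ?_⟩
      match x with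
      | none => rfl
      | some v => exact absurd ⟨v, hx⟩ h2
    have hval : RValid G' C' r S2' none := by
      refine Or.inr ⟨some a, ⟨(hadjU a).2 ha, ?_⟩, some b, ⟨(hadjU b).2 hb, ?_⟩, hab⟩
      · rw [hS2eq]; simp
      · rw [hS2eq]; simp
    right; left
    have : validSet G' C' r S2' = S2' := by
      refine Set.Subset.antisymm (fun v hv => hv.1) fun x hx => ?_
      rw [hS2eq] at hx
      rw [hx]
      exact ⟨hn, hval⟩
    rw [this]
  -- both projections nonempty
  set S1 : Set V := {v : V | some v ∈ S1'} with hS1def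
  set S2 : Set V := {v : V | some v ∈ S2'} with hS2def
  have hS1 : ∀ w : V, some w ∈ S1' ↔ w ∈ S1 := fun _ => Iff.rfl
  have hS2 : ∀ w : V, some w ∈ S2' ↔ w ∈ S2 := fun _ => Iff.rfl
  have hd : Disjoint S1 S2 := by
    rw [Set.disjoint_left]
    intro v hv1 hv2
    exact (Set.disjoint_left.1 hdisj) hv1 hv2
  have hmap1 : some '' validSet G C r S1 ⊆ validSet G' C' r S1' := by
    rintro _ ⟨v, hv, rfl⟩
    exact ⟨hv.1, aux_rvalid_map hadj hS1 hv.2⟩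
  have hmap2 : some '' validSet G C r S2 ⊆ validSet G' C' r S2' := by
    rintro _ ⟨v, hv, rfl⟩
    exact ⟨hv.1, aux_rvalid_map hadj hS2 hv.2⟩
  rcases hG S1 S2 h1 h2 hd with hc1 | hc2 | ⟨hm3, hc3⟩ | ⟨u, hu, w, hw, huw⟩
  · left
    have heq : validSet G C r S1 = S1 :=
      Set.eq_of_subset_of_ncard_le (fun v hv => hv.1) hc1.ge (Set.toFinite _)
    rw [aux_full hadj hadjU ha hb hc hab hac hbc heq
      (fun u hu w hw => hmono u (Or.inl hu) w (Or.inl hw))]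
  · right; left
    have heq : validSet G C r S2 = S2 :=
      Set.eq_of_subset_of_ncard_le (fun v hv => hv.1) hc2.ge (Set.toFinite _)
    rw [aux_full hadj hadjU ha hb hc hab hac hbc heq
      (fun u hu w hw => hmono u (Or.inr hu) w (Or.inr hw))]
  · right; right; left
    refine ⟨hmono, ?_⟩
    calc s ≤ (validSet G C r S1 ∪ validSet G C r S2).ncard := hc3
      _ = (some '' (validSet G C r S1 ∪ validSet G C r S2)).ncard :=
        (Set.ncard_image_of_injective _ (Option.some_injective V)).symm
      _ ≤ _ := by
        refine Set.ncard_le_ncard ?_ (Set.toFinite _)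
        rw [Set.image_union]
        exact Set.union_subset_union hmap1 hmap2
  · right; right; right
    have hU : some u ∈ validSet G' C' r S1' ∪ validSet G' C' r S2' := by
      rcases hu with hu | hu
      · exact Or.inl (hmap1 ⟨u, hu, rfl⟩)
      · exact Or.inr (hmap2 ⟨u, hu, rfl⟩)
    have hW : some w ∈ validSet G' C' r S1' ∪ validSet G' C' r S2' := by
      rcases hw with hw | hw
      · exact Or.inl (hmap1 ⟨w, hw, rfl⟩)
      · exact Or.inr (hmap2 ⟨w, hw, rfl⟩)
    exact ⟨some u, hU, some w, hW, huw⟩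
end

section
/- Let G be r-robust with coloring and let G' be obtained from G by adding a new vertex u adjacent to at least r vertices of G (of any colors). Then G' is r-robust with coloring. -/
variable {V : Type*} {Γ : Type*}

theorem rRobustC_add_vertex [Fintype V] (G : SimpleGraph V)
    (G' : SimpleGraph (Option V)) (C : V → Γ) (cu : Γ) (r : ℕ) (T : Set V)
    (hadj : ∀ a b : V, G'.Adj (some a) (some b) ↔ G.Adj a b)
    (hadjU : ∀ a : V, G'.Adj none (some a) ↔ a ∈ T)
    (hTcard : r ≤ T.ncard)
    (hG : RRobustC G C r) :
    RRobustC G' (fun x => x.elim cu C) r := by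
  intro S1 S2 h1 h2 hdisj
  classical
  have hmap : ∀ (S : Set (Option V)) (v : V),
      Option.some '' (nOut G {w | some w ∈ S} v) ⊆ nOut G' S (some v) := by
    rintro S v _ ⟨w, ⟨hw1, hw2⟩, rfl⟩
    exact ⟨(hadj v w).2 hw1, hw2⟩
  have hcard : ∀ (S : Set (Option V)) (v : V),
      (nOut G {w | some w ∈ S} v).ncard ≤ (nOut G' S (some v)).ncard := by
    intro S v
    calc (nOut G {w | some w ∈ S} v).ncard
        = (Option.some '' (nOut G {w | some w ∈ S} v)).ncard :=
          (Set.ncard_image_of_injective _ (Option.some_injective V)).symm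
      _ ≤ _ := Set.ncard_le_ncard (hmap S v) (Set.toFinite _)
  have htrans : ∀ (S : Set (Option V)) (v : V),
      (r ≤ (nOut G {w | some w ∈ S} v).ncard ∨ ThreeDistinct G C {w | some w ∈ S} v) →
      (r ≤ (nOut G' S (some v)).ncard ∨ ThreeDistinct G' (fun x => x.elim cu C) S (some v)) := by
    rintro S v (h | ⟨a, ha, b, hb, c, hc, hab, hac, hbc⟩)
    · exact Or.inl (le_trans h (hcard S v))
    · exact Or.inr ⟨some a, hmap S v ⟨a, ha, rfl⟩, some b, hmap S v ⟨b, hb, rfl⟩,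
        some c, hmap S v ⟨c, hc, rfl⟩, hab, hac, hbc⟩
  have hempty : ∀ S : Set (Option V), S.Nonempty → ¬ ({w : V | some w ∈ S}).Nonempty →
      (∃ x ∈ S, r ≤ (nOut G' S x).ncard) := by
    intro S hS hne
    have hnone : (none : Option V) ∈ S := by
      obtain ⟨x, hx⟩ := hS
      cases x with
      | none => exact hx
      | some w => exact absurd ⟨w, hx⟩ hne
    refine ⟨none, hnone, ?_⟩
    have hsub : Option.some '' T ⊆ nOut G' S none := by
      rintro _ ⟨a, ha, rfl⟩
      exact ⟨(hadjU a).2 ha, fun hmem => hne ⟨a, hmem⟩⟩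
    calc r ≤ T.ncard := hTcard
      _ = (Option.some '' T).ncard := (Set.ncard_image_of_injective _ (Option.some_injective V)).symm
      _ ≤ _ := Set.ncard_le_ncard hsub (Set.toFinite _)
  by_cases he1 : ({w : V | some w ∈ S1}).Nonempty
  · by_cases he2 : ({w : V | some w ∈ S2}).Nonempty
    · have hd : Disjoint {w : V | some w ∈ S1} {w : V | some w ∈ S2} := by
        rw [Set.disjoint_left] at hdisj ⊢
        intro a ha hb
        exact hdisj ha hb
      rcases hG _ _ he1 he2 hd with ⟨v, hv, h⟩ | ⟨v, hv, h⟩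
      · exact Or.inl ⟨some v, hv, htrans S1 v h⟩
      · exact Or.inr ⟨some v, hv, htrans S2 v h⟩
    · obtain ⟨x, hx, hr⟩ := hempty S2 h2 he2
      exact Or.inr ⟨x, hx, Or.inl hr⟩
  · obtain ⟨x, hx, hr⟩ := hempty S1 h1 he1
    exact Or.inl ⟨x, hx, Or.inl hr⟩
end

section
/- If a colored graph G (with at least 2 vertices) uses at most four distinct colors and every color class is nonempty for at least two colors, then G is not mono-chromatic robust; in particular, at least five colors are required for any graph to be mono-chromatic robust. More precisely: if the coloring C : V → Γ uses at most 4 colors, then there exist nonempty disjoint subsets S1, S2 of V such that no node of S1 ∪ S2 has three neighbors of pairwise distinct colors outside its respective set. -/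
variable {V : Type*} {Γ : Type*}

lemma noThree_of_card_le_two {V Γ : Type*} [DecidableEq Γ] (G : SimpleGraph V) (C : V → Γ)
    (S : Set V) (v : V) (T : Finset Γ) (hT : T.card ≤ 2)
    (hcol : ∀ u, u ∉ S → C u ∈ T) : ¬ ThreeDistinct G C S v := by
  rintro ⟨a, ⟨_, ha⟩, b, ⟨_, hb⟩, c, ⟨_, hc⟩, hab, hac, hbc⟩
  have hsub : ({C a, C b, C c} : Finset Γ) ⊆ T := by
    intro x hx
    simp only [Finset.mem_insert, Finset.mem_singleton] at hx
    rcases hx with rfl | rfl | rfl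
    · exact hcol a ha
    · exact hcol b hb
    · exact hcol c hc
  have h3 : ({C a, C b, C c} : Finset Γ).card = 3 := by
    rw [Finset.card_insert_of_notMem (by simp [hab, hac]),
      Finset.card_insert_of_notMem (by simp [hbc]), Finset.card_singleton]
  have := Finset.card_le_card hsub
  omega

theorem not_monoRobust_of_le_four_colors [Fintype V] (G : SimpleGraph V) (C : V → Γ)
    (h2 : 2 ≤ (Set.range C).ncard) (h4 : (Set.range C).ncard ≤ 4) :
    (¬ MonoRobust G C) ∧
    ∃ S1 S2 : Set V, S1.Nonempty ∧ S2.Nonempty ∧ Disjoint S1 S2 ∧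
      (∀ v ∈ S1, ¬ ThreeDistinct G C S1 v) ∧
      (∀ v ∈ S2, ¬ ThreeDistinct G C S2 v) := by
  classical
  have hfin : (Set.range C).Finite := Set.finite_range C
  set R : Finset Γ := hfin.toFinset with hRdef
  have hRcard : R.card = (Set.range C).ncard := (Set.ncard_eq_toFinset_card _ hfin).symm
  have hmemR : ∀ u : V, C u ∈ R := by
    intro u; rw [hRdef, Set.Finite.mem_toFinset]; exact ⟨u, rfl⟩
  have hm : max 1 (R.card - 2) ≤ R.card := by omega
  obtain ⟨A, hAR, hAcard⟩ := Finset.exists_subset_card_eq hm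
  have hsd : (R \ A).card = R.card - A.card := Finset.card_sdiff_of_subset hAR
  have hA2 : A.card ≤ 2 := by omega
  have hB2 : (R \ A).card ≤ 2 := by omega
  have hA1 : 1 ≤ A.card := by omega
  have hB1 : 1 ≤ (R \ A).card := by omega
  set S1 : Set V := {v | C v ∈ A} with hS1
  set S2 : Set V := {v | C v ∉ A} with hS2
  have hn1 : S1.Nonempty := by
    obtain ⟨c, hc⟩ := Finset.card_pos.mp hA1
    have : c ∈ (Set.range C) := by
      have := hAR hc; rwa [hRdef, Set.Finite.mem_toFinset] at this
    obtain ⟨v, rfl⟩ := this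
    exact ⟨v, hc⟩
  have hn2 : S2.Nonempty := by
    obtain ⟨c, hc⟩ := Finset.card_pos.mp hB1
    obtain ⟨hcR, hcA⟩ := Finset.mem_sdiff.mp hc
    have : c ∈ (Set.range C) := by rwa [hRdef, Set.Finite.mem_toFinset] at hcR
    obtain ⟨v, rfl⟩ := this
    exact ⟨v, hcA⟩
  have hdisj : Disjoint S1 S2 := by
    rw [Set.disjoint_iff]
    rintro v ⟨hv1, hv2⟩
    exact hv2 hv1
  have hno1 : ∀ v ∈ S1, ¬ ThreeDistinct G C S1 v := by
    intro v _
    refine noThree_of_card_le_two G C S1 v (R \ A) hB2 ?_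
    intro u hu
    exact Finset.mem_sdiff.mpr ⟨hmemR u, hu⟩
  have hno2 : ∀ v ∈ S2, ¬ ThreeDistinct G C S2 v := by
    intro v _
    refine noThree_of_card_le_two G C S2 v A hA2 ?_
    intro u hu
    simpa [hS2] using hu
  refine ⟨?_, S1, S2, hn1, hn2, hdisj, hno1, hno2⟩
  intro hM
  rcases hM S1 S2 hn1 hn2 hdisj with ⟨v, hv, h3⟩ | ⟨v, hv, h3⟩
  · exact hno1 v hv h3
  · exact hno2 v hv h3
end

section
/- Let G' be obtained from a mono-chromatic robust colored graph G by adding a new vertex u adjacent to at least three vertices of G with pairwise distinct colors (u assigned any color). Then G' is mono-chromatic robust. -/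
variable {V : Type*} {Γ : Type*}

theorem monoRobust_add_vertex_three_colors [Fintype V] (G : SimpleGraph V)
    (G' : SimpleGraph (Option V)) (C : V → Γ) (cu : Γ) (T : Set V)
    (a b c : V)
    (hadj : ∀ x y : V, G'.Adj (some x) (some y) ↔ G.Adj x y)
    (hadjU : ∀ x : V, G'.Adj none (some x) ↔ x ∈ T)
    (ha : a ∈ T) (hb : b ∈ T) (hc : c ∈ T)
    (hab : C a ≠ C b) (hac : C a ≠ C c) (hbc : C b ≠ C c)
    (hG : MonoRobust G C) :
    MonoRobust G' (fun x => x.elim cu C) := by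
  classical
  intro S1 S2 h1 h2 hdisj
  set C' : Option V → Γ := fun x => x.elim cu C with hC'
  have lift : ∀ (S : Set (Option V)) (v : V), ThreeDistinct G C {x | some x ∈ S} v →
      ThreeDistinct G' C' S (some v) := by
    rintro S v ⟨x, ⟨hx1, hx2⟩, y, ⟨hy1, hy2⟩, z, ⟨hz1, hz2⟩, e1, e2, e3⟩
    exact ⟨some x, ⟨(hadj v x).2 hx1, hx2⟩, some y, ⟨(hadj v y).2 hy1, hy2⟩,
      some z, ⟨(hadj v z).2 hz1, hz2⟩, e1, e2, e3⟩
  have base : ∀ S : Set (Option V), (∀ x : V, some x ∉ S) → none ∈ S →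
      ∃ v ∈ S, ThreeDistinct G' C' S v := by
    intro S hx hn
    exact ⟨none, hn, some a, ⟨(hadjU a).2 ha, hx a⟩, some b, ⟨(hadjU b).2 hb, hx b⟩,
      some c, ⟨(hadjU c).2 hc, hx c⟩, hab, hac, hbc⟩
  by_cases h1' : ({x | some x ∈ S1} : Set V).Nonempty
  · by_cases h2' : ({x | some x ∈ S2} : Set V).Nonempty
    · have hd : Disjoint {x | some x ∈ S1} {x | some x ∈ S2} := by
        rw [Set.disjoint_left] at hdisj ⊢
        intro x hx hx2; exact hdisj hx hx2
      rcases hG _ _ h1' h2' hd with ⟨v, hv, ht⟩ | ⟨v, hv, ht⟩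
      · exact Or.inl ⟨some v, hv, lift _ _ ht⟩
      · exact Or.inr ⟨some v, hv, lift _ _ ht⟩
    · rw [Set.not_nonempty_iff_eq_empty] at h2'
      have hx : ∀ x : V, some x ∉ S2 := fun x hx =>
        (Set.eq_empty_iff_forall_notMem.1 h2' x) hx
      obtain ⟨o, ho⟩ := h2
      match o, ho with
      | none, ho => exact Or.inr (base S2 hx ho)
      | some x, ho => exact absurd ho (hx x)
  · rw [Set.not_nonempty_iff_eq_empty] at h1'
    have hx : ∀ x : V, some x ∉ S1 := fun x hx =>
      (Set.eq_empty_iff_forall_notMem.1 h1' x) hx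
    obtain ⟨o, ho⟩ := h1
    match o, ho with
    | none, ho => exact Or.inl (base S1 hx ho)
    | some x, ho => exact absurd ho (hx x)
end
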